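/- Under the Gelfand triple $V = L^2(\mu_M) \subset H = F_{1,2}^* \subset V^*$, let $A(u, \mu) := (L - \epsilon)(\Psi(u, \mu) + \lambda u)$ with $\epsilon, \lambda \in (0,1)$, where $\Psi$ satisfies: (A3) $2\int_M(\Psi(u,\mu)-\Psi(v,\nu))(u-v)\,d\mu_M \ge \alpha_1|\Psi(u,\mu)-\Psi(v,\nu)|_2^2 - \alpha_2\mathbb{W}_{2,H}(\mu,\nu)^2 - \alpha_3\|u-v\|_{H}^2$ with $\alpha_1, \alpha_2, \alpha_3 > 0$. Then there is a constant $C_{\epsilon} > 0$ such that for all $u, v \in V$ and $\mu, \nu \in \mathcal{P}_2(H)$: $2\,{}_{V^*}\langle A(u,\mu) - A(v,\nu), u - v\rangle_V \le \alpha_2\,\mathbb{W}_{2,H}(\mu,\nu)^2 + (C_{\epsilon} + \alpha_3)\|u - v\|_H^2$. -/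

import Mathlib

open MeasureTheory
open scoped RealInnerProductSpace

/-- The squared `L²`-Wasserstein distance `W_{2,H}(μ,ν)²`, defined as the infimum over
all couplings `π` of `μ` and `ν` of `∫ ‖ξ - η‖² dπ`. -/
noncomputable def W2sq {H : Type*} [NormedAddCommGroup H] [MeasurableSpace H]
    (μ ν : Measure H) : ℝ :=
  sInf {c : ℝ | ∃ π : Measure (H × H),
    π.map Prod.fst = μ ∧ π.map Prod.snd = ν ∧ c = ∫ p : H × H, ‖p.1 - p.2‖ ^ 2 ∂π}

/-- Monotonicity estimate for `A(u,μ) := (L-ε)(Ψ(u,μ) + λu)` in the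
Gelfand triple `V = L²(μ_M) ⊂ H = F_{1,2}^* ⊂ V^*`: under assumption (A3),
`2⟨(Ψ(u,μ)-Ψ(v,ν)), u-v⟩₂ ≥ α₁|Ψ(u,μ)-Ψ(v,ν)|₂² - α₂ W(μ,ν)² - α₃‖u-v‖_H²`,
there is `C_ε > 0` such that
`2 ⟨A(u,μ) - A(v,ν), u - v⟩_{V^*,V} ≤ α₂ W(μ,ν)² + (C_ε + α₃)‖u - v‖_H²`.
Here `(L-ε) = -(1-L) + (1-ε)` with `T = (1-L) : V → V^*` satisfying
`T u v = ⟨u,v⟩₂`, `ι : H ⊂ V^*` the embedding with `ι h v = ⟨h, J v⟩_H`, and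
`J : V ⊂ H` the continuous embedding. -/
theorem stmt15
    (V H : Type*)
    [NormedAddCommGroup V] [InnerProductSpace ℝ V] [CompleteSpace V]
    [NormedAddCommGroup H] [InnerProductSpace ℝ H] [CompleteSpace H]
    [MeasurableSpace H] [BorelSpace H]
    (J : V →L[ℝ] H)
    (T : V →L[ℝ] StrongDual ℝ V)
    (hT : ∀ u v : V, T u v = ⟪u, v⟫)
    (ι : H →L[ℝ] StrongDual ℝ V)
    (hι : ∀ (h : H) (v : V), ι h v = ⟪h, J v⟫)
    (ε lam α1 α2 α3 : ℝ) (hε : ε ∈ Set.Ioo (0 : ℝ) 1) (hlam : lam ∈ Set.Ioo (0 : ℝ) 1)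
    (hα1 : 0 < α1) (hα2 : 0 < α2) (hα3 : 0 < α3)
    (Ψ : V → Measure H → V)
    (hA3 : ∀ (u v : V) (μ ν : Measure H),
      IsProbabilityMeasure μ → IsProbabilityMeasure ν →
      Integrable (fun z => ‖z‖ ^ 2) μ → Integrable (fun z => ‖z‖ ^ 2) ν →
      2 * ⟪Ψ u μ - Ψ v ν, u - v⟫ ≥
        α1 * ‖Ψ u μ - Ψ v ν‖ ^ 2 - α2 * W2sq μ ν - α3 * ‖J u - J v‖ ^ 2) :
    ∃ C > (0 : ℝ), ∀ (u v : V) (μ ν : Measure H),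
      IsProbabilityMeasure μ → IsProbabilityMeasure ν →
      Integrable (fun z => ‖z‖ ^ 2) μ → Integrable (fun z => ‖z‖ ^ 2) ν →
      2 * ((((1 - ε) • ι (J (Ψ u μ + lam • u)) - T (Ψ u μ + lam • u)) -
            ((1 - ε) • ι (J (Ψ v ν + lam • v)) - T (Ψ v ν + lam • v))) (u - v)) ≤
        α2 * W2sq μ ν + (C + α3) * ‖J u - J v‖ ^ 2 := by

  obtain ⟨hε0, hε1⟩ := hε
  obtain ⟨hl0, hl1⟩ := hlam
  have h1ε : (0:ℝ) < 1 - ε := by linarith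
  refine ⟨((1 - ε) * ‖J‖) ^ 2 / α1 + 2 * (1 - ε) * lam, ?_, ?_⟩
  · have h1 : (0:ℝ) ≤ ((1 - ε) * ‖J‖) ^ 2 / α1 := div_nonneg (sq_nonneg _) hα1.le
    have h2 : (0:ℝ) < 2 * (1 - ε) * lam := by positivity
    linarith
  · intro u v μ ν hμ hν hiμ hiν
    have hA := hA3 u v μ ν hμ hν hiμ hiν
    set x := ‖Ψ u μ - Ψ v ν‖ with hxdef
    set y := ‖J u - J v‖ with hydef
    have hLHS : (((1 - ε) • ι (J (Ψ u μ + lam • u)) - T (Ψ u μ + lam • u)) -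
            ((1 - ε) • ι (J (Ψ v ν + lam • v)) - T (Ψ v ν + lam • v))) (u - v)
        = (1 - ε) * (⟪J (Ψ u μ) - J (Ψ v ν), J u - J v⟫ + lam * ⟪J u - J v, J u - J v⟫)
          - (⟪Ψ u μ - Ψ v ν, u - v⟫ + lam * ⟪u - v, u - v⟫) := by
      simp only [ContinuousLinearMap.sub_apply, ContinuousLinearMap.add_apply,
        ContinuousLinearMap.smul_apply, smul_eq_mul, map_add, _root_.map_smul, hι, hT,
        inner_add_left, inner_sub_left, inner_sub_right, inner_add_right,
        real_inner_smul_left, real_inner_smul_right, map_sub]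
      ring
    have hJy : ⟪J u - J v, J u - J v⟫ = y ^ 2 := by
      rw [real_inner_self_eq_norm_sq]
    have hd2 : (0:ℝ) ≤ ⟪u - v, u - v⟫ := real_inner_self_nonneg
    have hI1 : ⟪J (Ψ u μ) - J (Ψ v ν), J u - J v⟫ ≤ ‖J‖ * x * y := by
      calc ⟪J (Ψ u μ) - J (Ψ v ν), J u - J v⟫
          ≤ ‖J (Ψ u μ) - J (Ψ v ν)‖ * ‖J u - J v‖ := real_inner_le_norm _ _
        _ ≤ ‖J‖ * x * y := by
            rw [← map_sub]
            exact mul_le_mul_of_nonneg_right (J.le_opNorm _) (norm_nonneg _)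
    have hyoung : 2 * (1 - ε) * (‖J‖ * x * y) ≤
        α1 * x ^ 2 + (((1 - ε) * ‖J‖) ^ 2 / α1) * y ^ 2 := by
      have heq : α1 * x ^ 2 + (((1 - ε) * ‖J‖) ^ 2 / α1) * y ^ 2 - 2 * (1 - ε) * (‖J‖ * x * y)
          = (α1 * x - (1 - ε) * ‖J‖ * y) ^ 2 / α1 := by
        field_simp
        ring
      have h0 : (0:ℝ) ≤ (α1 * x - (1 - ε) * ‖J‖ * y) ^ 2 / α1 := by positivity
      linarith [heq ▸ h0]
    have hcross : 2 * (1 - ε) * ⟪J (Ψ u μ) - J (Ψ v ν), J u - J v⟫ ≤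
        2 * (1 - ε) * (‖J‖ * x * y) := by
      have h2 : (0:ℝ) ≤ 2 * (1 - ε) := by linarith
      exact mul_le_mul_of_nonneg_left hI1 h2
    have hlam2 : (0:ℝ) ≤ 2 * lam * ⟪u - v, u - v⟫ := by positivity
    rw [hLHS, hJy]
    nlinarith [hA, hyoung, hcross, hlam2]
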